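/- Let f be holomorphic on a neighborhood of the closed disc D̄(0, r) in ℂ. Then for all 0 < r' < r, max_{|z| ≤ r'} |f'(z)| ≤ (8r/(r−r')²) · (max_{|z| ≤ r} |Re f(z)| + |f(0)|). -/

import Mathlib

open Metric

/-- Conjugation commutes with interval integrals. -/
lemma intervalIntegral_conj' (F : ℝ → ℂ) (a b : ℝ) :
    (∫ t in a..b, (starRingEnd ℂ) (F t)) = (starRingEnd ℂ) (∫ t in a..b, F t) := by
  unfold intervalIntegral
  rw [integral_conj, integral_conj, ← map_sub]

/-- The circle integral of the conjugate of a holomorphic function against the Cauchy kernel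
for the derivative vanishes. -/
lemma circleIntegral_conj_kernel_zero
    (r r' : ℝ) (hr' : 0 < r') (hrr' : r' < r)
    (f : ℂ → ℂ) (U : Set ℂ) (hU : IsOpen U) (hsub : closedBall (0 : ℂ) r ⊆ U)
    (hf : DifferentiableOn ℂ f U) (z : ℂ) (hz : z ∈ closedBall (0 : ℂ) r') :
    (∮ w in C(0, r), ((w - z) ^ 2)⁻¹ • (starRingEnd ℂ) (f w)) = 0 := by
  have hr : 0 < r := hr'.trans hrr'
  have hzle : ‖z‖ ≤ r' := by simpa [Complex.dist_eq] using hz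
  set g : ℂ → ℂ := fun w => -((r : ℂ) ^ 2 * f w / (((r : ℂ) ^ 2 - (starRingEnd ℂ) z * w) ^ 2))
    with hg
  have hden : ∀ w ∈ closedBall (0 : ℂ) r, ((r : ℂ) ^ 2 - (starRingEnd ℂ) z * w) ≠ 0 := by
    intro w hw h
    have hwle : ‖w‖ ≤ r := by simpa [Complex.dist_eq] using hw
    have h1 : ‖(starRingEnd ℂ) z * w‖ < r ^ 2 := by
      rw [norm_mul, Complex.norm_conj]
      calc ‖z‖ * ‖w‖ ≤ r' * r := by
            exact mul_le_mul hzle hwle (norm_nonneg _) hr'.le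
        _ < r * r := by nlinarith
        _ = r ^ 2 := by ring
    have h2 : (r : ℂ) ^ 2 = (starRingEnd ℂ) z * w := sub_eq_zero.mp h
    rw [← h2] at h1
    simp only [← Complex.ofReal_pow, Complex.norm_real, Real.norm_eq_abs] at h1
    rw [abs_of_nonneg (by positivity)] at h1
    exact lt_irrefl _ h1
  have hgc : ContinuousOn g (closedBall (0 : ℂ) r) := by
    apply ContinuousOn.neg
    apply ContinuousOn.div
    · exact continuousOn_const.mul ((hf.mono hsub).continuousOn)
    · fun_prop
    · intro w hw
      exact pow_ne_zero 2 (hden w hw)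
  have hgd : ∀ w ∈ ball (0 : ℂ) r \ (∅ : Set ℂ), DifferentiableAt ℂ g w := by
    intro w hw
    have hwU : U ∈ nhds w := hU.mem_nhds (hsub (ball_subset_closedBall hw.1))
    have hfd : DifferentiableAt ℂ f w := (hf.differentiableAt hwU)
    apply DifferentiableAt.neg
    apply DifferentiableAt.div
    · exact (differentiableAt_const _).mul hfd
    · fun_prop
    · exact pow_ne_zero 2 (hden w (ball_subset_closedBall hw.1))
  have hg0 : (∮ w in C(0, r), g w) = 0 :=
    Complex.circleIntegral_eq_zero_of_differentiable_on_off_countable hr.le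
      Set.countable_empty hgc hgd
  -- Now show the conjugate of our integral equals ∮ g
  have hkey : (starRingEnd ℂ) (∮ w in C(0, r), ((w - z) ^ 2)⁻¹ • (starRingEnd ℂ) (f w))
      = ∮ w in C(0, r), g w := by
    unfold circleIntegral
    rw [← intervalIntegral_conj']
    apply intervalIntegral.integral_congr
    intro θ _
    set w := circleMap 0 r θ with hw
    have hw0 : w ≠ 0 := circleMap_ne_center hr.ne' 
    have habsw : ‖w‖ = r := by
      rw [hw, norm_circleMap_zero, abs_of_pos hr]
    have hww : w * (starRingEnd ℂ) w = (r : ℂ) ^ 2 := by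
      rw [Complex.mul_conj, Complex.normSq_eq_norm_sq, habsw]
      push_cast; ring
    have hwz : w - z ≠ 0 := by
      intro h
      have : ‖w‖ = ‖z‖ := by rw [sub_eq_zero.mp h]
      rw [habsw] at this
      linarith [hzle, this.le]
    have hne : w ≠ z := sub_ne_zero.mp hwz
    have hcwz : (starRingEnd ℂ) w - (starRingEnd ℂ) z ≠ 0 :=
      sub_ne_zero.mpr fun h => hne ((starRingEnd ℂ).injective h)
    have hdw : ((r : ℂ) ^ 2 - (starRingEnd ℂ) z * w) ≠ 0 :=
      hden w (sphere_subset_closedBall (circleMap_mem_sphere (0:ℂ) hr.le θ))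
    have hrel : (r : ℂ) ^ 2 - (starRingEnd ℂ) z * w
        = ((starRingEnd ℂ) w - (starRingEnd ℂ) z) * w := by
      linear_combination -hww
    have hcw : (starRingEnd ℂ) w = (r : ℂ) ^ 2 / w := by
      rw [eq_div_iff hw0]
      linear_combination hww
    simp only [deriv_circleMap, smul_eq_mul, ← hw, map_mul, map_inv₀, map_pow, map_sub,
      Complex.conj_conj, Complex.conj_I, hg]
    rw [hrel, hcw]
    field_simp
  calc (∮ w in C(0, r), ((w - z) ^ 2)⁻¹ • (starRingEnd ℂ) (f w))
      = (starRingEnd ℂ) ((starRingEnd ℂ)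
          (∮ w in C(0, r), ((w - z) ^ 2)⁻¹ • (starRingEnd ℂ) (f w))) := by
        rw [Complex.conj_conj]
    _ = (starRingEnd ℂ) (∮ w in C(0, r), g w) := by rw [hkey]
    _ = 0 := by rw [hg0]; simp

/-- Borel–Carathéodory type bound for the derivative of a holomorphic function. -/
theorem borel_caratheodory_deriv_bound
    (r r' : ℝ) (hr' : 0 < r') (hrr' : r' < r)
    (f : ℂ → ℂ) (U : Set ℂ) (hU : IsOpen U) (hsub : closedBall (0 : ℂ) r ⊆ U)
    (hf : DifferentiableOn ℂ f U) :
    ∀ z ∈ closedBall (0 : ℂ) r',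
      ‖deriv f z‖ ≤ 8 * r / (r - r') ^ 2 *
        ((⨆ w : closedBall (0 : ℂ) r, |(f w).re|) + ‖f 0‖) := by
  intro z hz
  have hr : 0 < r := hr'.trans hrr'
  have hzle : ‖z‖ ≤ r' := by simpa [Complex.dist_eq] using hz
  have hzr : z ∈ ball (0 : ℂ) r := by
    simp only [mem_ball, Complex.dist_eq, sub_zero]
    exact lt_of_le_of_lt hzle hrr'
  set S : ℝ := ⨆ w : closedBall (0 : ℂ) r, |(f w).re| with hS
  have hfc : ContinuousOn f (closedBall (0 : ℂ) r) := (hf.mono hsub).continuousOn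
  have hbdd : BddAbove (Set.range fun w : closedBall (0 : ℂ) r => |(f w).re|) := by
    obtain ⟨C, hC⟩ := ((isCompact_closedBall (0:ℂ) r).image_of_continuousOn
      ((Complex.continuous_re.comp_continuousOn hfc).abs)).bddAbove
    refine ⟨C, ?_⟩
    rintro x ⟨w, rfl⟩
    exact hC ⟨w, w.2, rfl⟩
  have hSle : ∀ w ∈ closedBall (0 : ℂ) r, |(f w).re| ≤ S := by
    intro w hw
    exact le_ciSup hbdd (⟨w, hw⟩ : closedBall (0 : ℂ) r)
  have hS0 : 0 ≤ S :=
    le_trans (abs_nonneg _) (hSle 0 (mem_closedBall_self hr.le))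
  -- Cauchy formula for the derivative
  have hderiv :
      deriv f z = (2 * Real.pi * Complex.I : ℂ)⁻¹ • ∮ w in C(0, r), ((w - z) ^ 2)⁻¹ • f w :=
    (Complex.two_pi_I_inv_smul_circleIntegral_sub_sq_inv_smul_of_differentiable
      hU hsub hf hzr).symm
  -- the conjugate part vanishes
  have hconj := circleIntegral_conj_kernel_zero r r' hr' hrr' f U hU hsub hf z hz
  -- kernel continuity on the sphere
  have hker : ContinuousOn (fun w : ℂ => ((w - z) ^ 2)⁻¹) (sphere (0 : ℂ) r) := by
    apply ContinuousOn.inv₀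
    · fun_prop
    · intro w hw h
      have habsw : ‖w‖ = r := by
        simpa [Complex.dist_eq] using hw
      have : w - z = 0 := by
        have := sq_eq_zero_iff.mp h
        exact this
      have : ‖w‖ = ‖z‖ := by rw [sub_eq_zero.mp this]
      rw [habsw] at this
      linarith [hzle, this.le]
  have hre : ContinuousOn (fun w : ℂ => ((2 * (f w).re : ℝ) : ℂ)) (sphere (0 : ℂ) r) :=
    Complex.continuous_ofReal.comp_continuousOn
      (continuousOn_const.mul
        (Complex.continuous_re.comp_continuousOn (hfc.mono sphere_subset_closedBall)))
  have hint1 : CircleIntegrable (fun w : ℂ => ((w - z) ^ 2)⁻¹ • ((2 * (f w).re : ℝ) : ℂ)) 0 r :=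
    ContinuousOn.circleIntegrable hr.le (hker.smul hre)
  have hint2 : CircleIntegrable (fun w : ℂ => ((w - z) ^ 2)⁻¹ • (starRingEnd ℂ) (f w)) 0 r :=
    ContinuousOn.circleIntegrable hr.le
      (hker.smul ((Complex.continuous_conj.comp_continuousOn
        (hfc.mono sphere_subset_closedBall))))
  -- rewrite the integral using only the real part
  have hsplit : (∮ w in C(0, r), ((w - z) ^ 2)⁻¹ • f w)
      = ∮ w in C(0, r), ((w - z) ^ 2)⁻¹ • ((2 * (f w).re : ℝ) : ℂ) := by
    have heq : (∮ w in C(0, r), ((w - z) ^ 2)⁻¹ • f w)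
        = ∮ w in C(0, r), (((w - z) ^ 2)⁻¹ • ((2 * (f w).re : ℝ) : ℂ)
            - ((w - z) ^ 2)⁻¹ • (starRingEnd ℂ) (f w)) := by
      unfold circleIntegral
      apply intervalIntegral.integral_congr
      intro θ _
      simp only [smul_eq_mul]
      have h := Complex.add_conj (f (circleMap 0 r θ))
      push_cast at h ⊢
      linear_combination (deriv (circleMap 0 r) θ * ((circleMap 0 r θ - z) ^ 2)⁻¹) * h
    rw [heq, circleIntegral.integral_sub hint1 hint2, hconj, sub_zero]
  -- norm bound on the sphere
  have hbound : ∀ w ∈ sphere (0 : ℂ) r,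
      ‖((w - z) ^ 2)⁻¹ • ((2 * (f w).re : ℝ) : ℂ)‖ ≤ 2 * S / (r - r') ^ 2 := by
    intro w hw
    have habsw : ‖w‖ = r := by simpa [Complex.dist_eq] using hw
    have hwz : r - r' ≤ ‖w - z‖ := by
      have h1 := norm_sub_norm_le w z
      have h2 : ‖z‖ ≤ r' := hzle
      rw [habsw] at h1
      linarith
    have hwz0 : (0:ℝ) < r - r' := by linarith
    rw [norm_smul]
    have h1 : ‖(((w - z) ^ 2)⁻¹ : ℂ)‖ ≤ ((r - r') ^ 2)⁻¹ := by
      rw [norm_inv, norm_pow]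
      gcongr
    have h2 : ‖((2 * (f w).re : ℝ) : ℂ)‖ ≤ 2 * S := by
      rw [Complex.norm_real, Real.norm_eq_abs, abs_mul, abs_two]
      exact mul_le_mul_of_nonneg_left (hSle w (sphere_subset_closedBall hw)) (by norm_num)
    calc ‖(((w - z) ^ 2)⁻¹ : ℂ)‖ * ‖((2 * (f w).re : ℝ) : ℂ)‖
        ≤ ((r - r') ^ 2)⁻¹ * (2 * S) :=
          mul_le_mul h1 h2 (norm_nonneg _) (by positivity)
      _ = 2 * S / (r - r') ^ 2 := by ring
  -- combine
  have hnorm : ‖deriv f z‖ ≤ r * (2 * S / (r - r') ^ 2) := by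
    rw [hderiv, hsplit]
    exact circleIntegral.norm_two_pi_i_inv_smul_integral_le_of_norm_le_const hr.le hbound
  have hwz0 : (0:ℝ) < (r - r') ^ 2 := by
    have h : 0 < r - r' := by linarith
    positivity
  have hnum : r * (2 * S) ≤ 8 * r * (S + ‖f 0‖) := by nlinarith [norm_nonneg (f 0)]
  calc ‖deriv f z‖ ≤ r * (2 * S / (r - r') ^ 2) := hnorm
    _ = r * (2 * S) / (r - r') ^ 2 := by ring
    _ ≤ 8 * r * (S + ‖f 0‖) / (r - r') ^ 2 := by gcongr
    _ = 8 * r / (r - r') ^ 2 * (S + ‖f 0‖) := by ring
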